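/- Let A and B be positive bounded operators on a complex Hilbert space H with AB = BA. Then AB = P_{cl R(A)} P_{cl R(B)} |AB| is the polar decomposition of AB; that is, P_{cl R(A)} P_{cl R(B)} is a partial isometry and (P_{cl R(A)} P_{cl R(B)})^*(P_{cl R(A)} P_{cl R(B)}) equals the orthogonal projection onto the closure of the range of (AB)^*. -/

import Mathlib

open ContinuousLinearMap

variable {H : Type*} [NormedAddCommGroup H] [InnerProductSpace ℂ H] [CompleteSpace H]

/-- The absolute value `|T| = (T^*T)^(1/2)` of a bounded operator on a complex
Hilbert space, defined via the continuous functional calculus. -/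
noncomputable def absOp (T : H →L[ℂ] H) : H →L[ℂ] H :=
  cfc Real.sqrt (adjoint T * T)

/-- The orthogonal projection of `H` onto the closure of the range of `T`,
regarded as an operator on `H`. -/
noncomputable def rangeProjOp (T : H →L[ℂ] H) : H →L[ℂ] H :=
  (LinearMap.range (T : H →ₗ[ℂ] H)).topologicalClosure.subtypeL ∘L
    Submodule.orthogonalProjectionOnto (LinearMap.range (T : H →ₗ[ℂ] H)).topologicalClosure

/-- `U` is a partial isometry: `U^*U` is an orthogonal projection
(a self-adjoint idempotent). -/
def IsPartialIsometryOp (U : H →L[ℂ] H) : Prop :=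
  IsSelfAdjoint (adjoint U * U) ∧ (adjoint U * U) * (adjoint U * U) = adjoint U * U

/-- `T = U|T|` is the polar decomposition of `T`: `U` is a partial isometry and
`U^*U` is the orthogonal projection onto the closure of the range of `T^*`. -/
def IsPolarDecompositionOp (T U : H →L[ℂ] H) : Prop :=
  T = U * absOp T ∧ IsPartialIsometryOp U ∧ adjoint U * U = rangeProjOp (adjoint T)

section Auxiliary

open Polynomial
open scoped InnerProductSpace

set_option synthInstance.maxHeartbeats 1000000
set_option maxHeartbeats 1000000

private lemma commute_aeval' {A : Type*} [Ring A] [Algebra ℝ A] {a b : A} (hab : Commute a b)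
    (p : ℝ[X]) : Commute (aeval a p) b := by
  induction p using Polynomial.induction_on with
  | C r => simpa using Algebra.commute_algebraMap_left r b
  | add p q hp hq => simpa [map_add] using hp.add_left hq
  | monomial n r _ =>
    simp only [map_mul, map_pow, aeval_C, aeval_X]
    exact Commute.mul_left (Algebra.commutes r b) (hab.pow_left _)

/-- If `b` commutes with a self-adjoint operator `a`, then `b` commutes with any
continuous function of `a`. -/
private lemma commute_cfc' {a b : H →L[ℂ] H} (ha : IsSelfAdjoint a) (hab : Commute a b)
    (f : ℝ → ℝ) : Commute (cfc f a) b := by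
  by_cases hf : ContinuousOn f (spectrum ℝ a)
  · rw [cfc_apply f a ha hf]
    suffices hall : ∀ g : C(spectrum ℝ a, ℝ), Commute (cfcHom ha g) b from hall _
    have hdense : Dense (X := C(spectrum ℝ a, ℝ))
        ((polynomialFunctions (spectrum ℝ a) : Set C(spectrum ℝ a, ℝ))) := by
      rw [dense_iff_closure_eq, ← Subalgebra.topologicalClosure_coe,
        polynomialFunctions.topologicalClosure]
      rfl
    have hcont : Continuous (cfcHom ha (R := ℝ)) := (cfcHom_isClosedEmbedding ha).continuous
    have heq : (fun g : C(spectrum ℝ a, ℝ) => cfcHom ha g * b)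
        = fun g => b * cfcHom ha g := by
      refine Continuous.ext_on hdense (hcont.mul continuous_const)
        (continuous_const.mul hcont) ?_
      intro g hg
      rw [polynomialFunctions_coe] at hg
      obtain ⟨p, rfl⟩ := hg
      have key : cfcHom ha ((toContinuousMapOnAlgHom (spectrum ℝ a)) p) = aeval a p := by
        have h1 := cfc_polynomial (R := ℝ) p a ha
        rw [← h1, cfc_apply _ a ha (p.continuous).continuousOn]
        congr 1
      simp only
      rw [key]
      exact (commute_aeval' hab p).eq
    intro g
    exact congrFun heq g
  · simp [cfc_apply_of_not_continuousOn a hf]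

private lemma cfc_sqrt_nonneg (a : H →L[ℂ] H) : 0 ≤ cfc Real.sqrt a :=
  cfc_nonneg fun x _ => Real.sqrt_nonneg x

private lemma cfc_sqrt_mul_self {a : H →L[ℂ] H} (ha : 0 ≤ a) :
    cfc Real.sqrt a * cfc Real.sqrt a = a := by
  rw [← cfc_mul Real.sqrt Real.sqrt a Real.continuous_sqrt.continuousOn
    Real.continuous_sqrt.continuousOn]
  rw [cfc_congr (f := fun x => Real.sqrt x * Real.sqrt x) (g := id)
    fun x hx => Real.mul_self_sqrt (spectrum_nonneg_of_nonneg ha hx)]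
  exact cfc_id ℝ a

private lemma sq_eq_of_nonneg {a b : H →L[ℂ] H} (ha : 0 ≤ a) (hb : 0 ≤ b)
    (h : a * a = b * b) : a = b := by
  have h1 : CFC.sqrt (b * b) = a := CFC.sqrt_unique h ha
  have h2 : CFC.sqrt (b * b) = b := CFC.sqrt_mul_self b hb
  rw [← h1, h2]

private lemma absOp_of_nonneg {T : H →L[ℂ] H} (hT : 0 ≤ T) : absOp T = T := by
  have hTsa : IsSelfAdjoint T := hT.isSelfAdjoint
  rw [absOp, ← star_eq_adjoint, hTsa.star_eq]
  have h1 : 0 ≤ T * T := by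
    simpa [hTsa.star_eq] using star_mul_self_nonneg T
  exact sq_eq_of_nonneg (cfc_sqrt_nonneg _) hT (cfc_sqrt_mul_self h1)

private lemma rangeProjOp_apply (T : H →L[ℂ] H) (x : H) :
    rangeProjOp T x =
      (Submodule.orthogonalProjectionOnto (LinearMap.range (T : H →ₗ[ℂ] H)).topologicalClosure x : H) := rfl

private lemma rangeProjOp_mem (T : H →L[ℂ] H) (x : H) :
    rangeProjOp T x ∈ (LinearMap.range (T : H →ₗ[ℂ] H)).topologicalClosure := by
  rw [rangeProjOp_apply]; exact SetLike.coe_mem _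

private lemma rangeProjOp_apply_of_mem (T : H →L[ℂ] H) {x : H}
    (hx : x ∈ (LinearMap.range (T : H →ₗ[ℂ] H)).topologicalClosure) : rangeProjOp T x = x := by
  rw [rangeProjOp_apply]; exact Submodule.starProjection_eq_self_iff.mpr hx

private lemma rangeProjOp_apply_self (T : H →L[ℂ] H) (x : H) : rangeProjOp T (T x) = T x :=
  rangeProjOp_apply_of_mem T (Submodule.le_topologicalClosure _ ⟨x, rfl⟩)

private lemma rangeProjOp_apply_of_orth (T : H →L[ℂ] H) {x : H}
    (hx : x ∈ ((LinearMap.range (T : H →ₗ[ℂ] H)).topologicalClosure)ᗮ) : rangeProjOp T x = 0 := by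
  rw [rangeProjOp_apply, Submodule.orthogonalProjectionOnto_apply_of_mem_orthogonal hx,
    Submodule.coe_zero]

private lemma rangeProjOp_isSelfAdjoint (T : H →L[ℂ] H) : IsSelfAdjoint (rangeProjOp T) :=
  isSelfAdjoint_starProjection _

private lemma rangeProjOp_idem (T : H →L[ℂ] H) : IsIdempotentElem (rangeProjOp T) := by
  ext x
  exact rangeProjOp_apply_of_mem T (rangeProjOp_mem T x)

private lemma inner_selfadj {S : H →L[ℂ] H} (hS : IsSelfAdjoint S) (x y : H) :
    ⟪S x, y⟫_ℂ = ⟪x, S y⟫_ℂ := by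
  conv_lhs => rw [← hS.adjoint_eq]
  exact ContinuousLinearMap.adjoint_inner_left S y x

/-- For a self-adjoint operator `S`, the orthogonal complement of the closure of the
range of `S` is exactly the kernel of `S`. -/
private lemma mem_orth_iff {S : H →L[ℂ] H} (hS : IsSelfAdjoint S) (x : H) :
    x ∈ ((LinearMap.range (S : H →ₗ[ℂ] H)).topologicalClosure)ᗮ ↔ S x = 0 := by
  constructor
  · intro hx
    have h1 : ⟪(S (S x) : H), x⟫_ℂ = 0 := by
      refine hx _ ?_
      exact Submodule.le_topologicalClosure _ ⟨S x, rfl⟩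
    have h2 : ⟪(S x : H), S x⟫_ℂ = 0 := by
      rw [inner_selfadj hS (S x) x] at h1
      exact h1
    exact inner_self_eq_zero.mp h2
  · intro hx
    intro u hu
    have hle : (LinearMap.range (S : H →ₗ[ℂ] H)).topologicalClosure ≤ (ℂ ∙ x)ᗮ := by
      refine Submodule.topologicalClosure_minimal _ ?_ (Submodule.isClosed_orthogonal _)
      rintro _ ⟨y, rfl⟩
      rw [Submodule.mem_orthogonal]
      intro v hv
      rw [Submodule.mem_span_singleton] at hv
      obtain ⟨c, rfl⟩ := hv
      rw [inner_smul_left]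
      have h3 : ⟪x, S y⟫_ℂ = 0 := by
        rw [← inner_selfadj hS x y, hx, inner_zero_left]
      rw [show ⟪x, (S : H →ₗ[ℂ] H) y⟫_ℂ = 0 from h3, mul_zero]
    have h4 : ⟪x, u⟫_ℂ = 0 := hle hu x (Submodule.mem_span_singleton_self x)
    rw [← inner_conj_symm, h4, map_zero]

/-- If `C` commutes with a self-adjoint operator `S`, then `C` commutes with the
orthogonal projection onto the closure of the range of `S`. -/
private lemma commute_rangeProjOp {S C : H →L[ℂ] H} (hS : IsSelfAdjoint S)
    (h : Commute S C) : Commute (rangeProjOp S) C := by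
  ext x
  show rangeProjOp S (C x) = C (rangeProjOp S x)
  set M := (LinearMap.range (S : H →ₗ[ℂ] H)).topologicalClosure with hM
  have hzero : S (x - rangeProjOp S x) = 0 := by
    refine (mem_orth_iff hS _).mp ?_
    rw [rangeProjOp_apply]
    exact Submodule.sub_starProjection_mem_orthogonal x
  have hCz : rangeProjOp S (C (x - rangeProjOp S x)) = 0 := by
    refine rangeProjOp_apply_of_orth S ((mem_orth_iff hS _).mpr ?_)
    have : S (C (x - rangeProjOp S x)) = C (S (x - rangeProjOp S x)) := by
      rw [← ContinuousLinearMap.mul_apply, ← ContinuousLinearMap.mul_apply, h.eq]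
    rw [this, hzero, map_zero]
  have hCy : rangeProjOp S (C (rangeProjOp S x)) = C (rangeProjOp S x) := by
    refine rangeProjOp_apply_of_mem S ?_
    have hle : M ≤ M.comap (C : H →ₗ[ℂ] H) := by
      refine Submodule.topologicalClosure_minimal _ ?_ ?_
      · rintro _ ⟨y, rfl⟩
        have : C (S y) = S (C y) := by
          rw [← ContinuousLinearMap.mul_apply, ← ContinuousLinearMap.mul_apply, h.eq]
        exact Submodule.mem_comap.mpr (this ▸ Submodule.le_topologicalClosure _ ⟨C y, rfl⟩)
      · exact (Submodule.isClosed_topologicalClosure _).preimage C.continuous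
    exact hle (rangeProjOp_mem S x)
  calc rangeProjOp S (C x)
      = rangeProjOp S (C (rangeProjOp S x)) +
        rangeProjOp S (C (x - rangeProjOp S x)) := by
        rw [← map_add, ← map_add]; congr 2; abel
    _ = C (rangeProjOp S x) := by rw [hCy, hCz, add_zero]

end Auxiliary

set_option maxHeartbeats 1000000 in
set_option synthInstance.maxHeartbeats 1000000 in
/-- If `A, B` are commuting positive operators, then
`AB = P_{cl R(A)} P_{cl R(B)} |AB|` is the polar decomposition of `AB`. -/
theorem polarDecomposition_of_pos_commute (A B : H →L[ℂ] H)
    (hA : A.IsPositive) (hB : B.IsPositive) (hAB : A * B = B * A) :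
    A * B = (rangeProjOp A * rangeProjOp B) * absOp (A * B) ∧
    IsPartialIsometryOp (rangeProjOp A * rangeProjOp B) ∧
    adjoint (rangeProjOp A * rangeProjOp B) * (rangeProjOp A * rangeProjOp B) =
        rangeProjOp (adjoint (A * B)) := by
  open scoped InnerProductSpace in
  have hA0 : 0 ≤ A := (nonneg_iff_isPositive A).mpr hA
  have hB0 : 0 ≤ B := (nonneg_iff_isPositive B).mpr hB
  have hAsa : IsSelfAdjoint A := hA.isSelfAdjoint
  have hBsa : IsSelfAdjoint B := hB.isSelfAdjoint
  have hcomm : Commute A B := hAB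
  set sA := cfc Real.sqrt A with hsA
  set sB := cfc Real.sqrt B with hsB
  have hsA2 : sA * sA = A := cfc_sqrt_mul_self hA0
  have hsB2 : sB * sB = B := cfc_sqrt_mul_self hB0
  have hsA0 : 0 ≤ sA := cfc_sqrt_nonneg A
  have hsB0 : 0 ≤ sB := cfc_sqrt_nonneg B
  have hsAsa : IsSelfAdjoint sA := hsA0.isSelfAdjoint
  have hsBsa : IsSelfAdjoint sB := hsB0.isSelfAdjoint
  have hsA_B : Commute sA B := commute_cfc' hAsa hcomm _
  have hsA_sB : Commute sA sB := (commute_cfc' hBsa hsA_B.symm _).symm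
  have hSsa : IsSelfAdjoint (sA * sB) := by
    rw [IsSelfAdjoint, star_mul, hsAsa.star_eq, hsBsa.star_eq, hsA_sB.eq]
  have hTeq : (sA * sB) * (sA * sB) = A * B := by
    rw [mul_assoc sA sB (sA * sB), ← mul_assoc sB sA sB, ← hsA_sB.eq,
      mul_assoc sA sB sB, ← mul_assoc sA sA (sB * sB), hsA2, hsB2]
  have hT0 : 0 ≤ A * B := by
    have h := star_mul_self_nonneg (sA * sB)
    rwa [hSsa.star_eq, hTeq] at h
  have hTsa : IsSelfAdjoint (A * B) := hT0.isSelfAdjoint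
  have habs : absOp (A * B) = A * B := absOp_of_nonneg hT0
  set PA := rangeProjOp A with hPA
  set PB := rangeProjOp B with hPB
  have hPA_B : Commute PA B := commute_rangeProjOp hAsa hcomm
  have hPA_PB : Commute PA PB := (commute_rangeProjOp hBsa hPA_B.symm).symm
  have hPAsa : IsSelfAdjoint PA := rangeProjOp_isSelfAdjoint A
  have hPBsa : IsSelfAdjoint PB := rangeProjOp_isSelfAdjoint B
  have hPAi : IsIdempotentElem PA := rangeProjOp_idem A
  have hPBi : IsIdempotentElem PB := rangeProjOp_idem B
  -- the key kernel lemma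
  have core : ∀ z : H, (A * B) z = 0 → PA (PB z) = 0 := by
    intro z hz
    have hSz : (sA * sB) z = 0 := by
      have h0 : ⟪(sA * sB) z, (sA * sB) z⟫_ℂ = 0 := by
        rw [inner_selfadj hSsa, ← ContinuousLinearMap.mul_apply (sA * sB) (sA * sB) z,
          hTeq, hz, inner_zero_right]
      exact inner_self_eq_zero.mp h0
    have hsBsAz : sB (sA z) = 0 := by
      have h1 : (sB * sA) z = 0 := by rw [← hsA_sB.eq]; exact hSz
      rw [ContinuousLinearMap.mul_apply] at h1
      exact h1
    have hBsAz : B (sA z) = 0 := by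
      have : (sB * sB) (sA z) = 0 := by
        rw [ContinuousLinearMap.mul_apply, hsBsAz, map_zero]
      rwa [hsB2] at this
    have hPB_sAz : PB (sA z) = 0 :=
      rangeProjOp_apply_of_orth B ((mem_orth_iff hBsa _).mpr hBsAz)
    have hsA_PB : Commute sA PB := (commute_rangeProjOp hBsa hsA_B.symm).symm
    have hsA_PBz : sA (PB z) = 0 := by
      have h2 : (sA * PB) z = (PB * sA) z := by rw [hsA_PB.eq]
      rw [ContinuousLinearMap.mul_apply, ContinuousLinearMap.mul_apply] at h2
      rw [h2, hPB_sAz]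
    have hA_PBz : A (PB z) = 0 := by
      have : (sA * sA) (PB z) = 0 := by
        rw [ContinuousLinearMap.mul_apply, hsA_PBz, map_zero]
      rwa [hsA2] at this
    exact rangeProjOp_apply_of_orth A ((mem_orth_iff hAsa _).mpr hA_PBz)
  -- part 1
  have hUT : (PA * PB) * (A * B) = A * B := by
    ext x
    rw [ContinuousLinearMap.mul_apply, ContinuousLinearMap.mul_apply]
    have h1 : PB ((A * B) x) = (A * B) x := by
      have hx : (A * B) x = B (A x) := by rw [hAB, ContinuousLinearMap.mul_apply]
      rw [hx]
      exact rangeProjOp_apply_self B (A x)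
    rw [h1]
    have hx2 : (A * B) x = A (B x) := ContinuousLinearMap.mul_apply A B x
    rw [hx2]
    exact rangeProjOp_apply_self A (B x)
  -- the adjoint of U
  have hadjU : adjoint (PA * PB) = PB * PA := by
    rw [← star_eq_adjoint, star_mul, hPAsa.star_eq, hPBsa.star_eq]
  have hPBA_i : IsIdempotentElem (PB * PA) := hPBi.mul_of_commute hPA_PB.symm hPAi
  have hUU : adjoint (PA * PB) * (PA * PB) = PA * PB := by
    rw [hadjU, hPA_PB.eq]
    exact hPBA_i
  -- part 3
  have hadjT : adjoint (A * B) = A * B := by rw [← star_eq_adjoint, hTsa.star_eq]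
  have hproj : PA * PB = rangeProjOp (A * B) := by
    ext x
    rw [ContinuousLinearMap.mul_apply]
    have hMTA : (LinearMap.range ((A * B : H →L[ℂ] H) : H →ₗ[ℂ] H)).topologicalClosure ≤
        (LinearMap.range (A : H →ₗ[ℂ] H)).topologicalClosure := by
      refine Submodule.topologicalClosure_mono ?_
      rintro _ ⟨y, rfl⟩
      exact ⟨B y, (ContinuousLinearMap.mul_apply A B y).symm⟩
    have hMTB : (LinearMap.range ((A * B : H →L[ℂ] H) : H →ₗ[ℂ] H)).topologicalClosure ≤
        (LinearMap.range (B : H →ₗ[ℂ] H)).topologicalClosure := by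
      refine Submodule.topologicalClosure_mono ?_
      rintro _ ⟨y, rfl⟩
      refine ⟨A y, ?_⟩
      show B (A y) = (A * B) y
      rw [← ContinuousLinearMap.mul_apply, ← hAB]
    have h1 : PB (rangeProjOp (A * B) x) = rangeProjOp (A * B) x :=
      rangeProjOp_apply_of_mem B (hMTB (rangeProjOp_mem _ x))
    have h2 : PA (rangeProjOp (A * B) x) = rangeProjOp (A * B) x :=
      rangeProjOp_apply_of_mem A (hMTA (rangeProjOp_mem _ x))
    have hz : (A * B) (x - rangeProjOp (A * B) x) = 0 := by
      refine (mem_orth_iff hTsa _).mp ?_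
      rw [rangeProjOp_apply]
      exact Submodule.sub_starProjection_mem_orthogonal x
    have h3 : PA (PB (x - rangeProjOp (A * B) x)) = 0 := core _ hz
    calc PA (PB x)
        = PA (PB (rangeProjOp (A * B) x + (x - rangeProjOp (A * B) x))) := by
          congr 2
          abel
      _ = PA (PB (rangeProjOp (A * B) x)) + PA (PB (x - rangeProjOp (A * B) x)) := by
          rw [map_add, map_add]
      _ = rangeProjOp (A * B) x := by rw [h1, h2, h3, add_zero]
  refine ⟨?_, ⟨?_, ?_⟩, ?_⟩
  · rw [habs]
    exact hUT.symm
  · rw [hUU, IsSelfAdjoint, star_mul, hPAsa.star_eq, hPBsa.star_eq, hPA_PB.eq]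
  · rw [hUU]
    exact hPAi.mul_of_commute hPA_PB hPBi
  · rw [hUU, hadjT]
    exact hproj
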